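/- Let H = (h_{ij})_{i,j∈[n]} be a symmetric partial matrix in which each off-diagonal entry h_{ij} is either a defined value in ℝ ∪ {+∞} or undefined, and assume that h_{ij} ≥ 0 for all defined entries and h_{ij} ≥ min{h_{jk}, h_{ik}} whenever h_{ij}, h_{jk}, h_{ik} are all defined (for distinct i, j, k). Then H is M♮-convex completable if and only if for every chordless cycle C of the assignment graph G_H, the minimum of the edge weights on C is attained by at least two edges of C, i.e., |argmin_{e∈C} w(e)| ≥ 2. -/

import Mathlib

open Finset

/-- M♮-convexity for functions on `{0,1}^n` (identified with finite subsets of the index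
set) with values in `ℝ ∪ {+∞}`. -/
def MnatConvex {ι : Type*} [DecidableEq ι] (f : Finset ι → WithTop ℝ) : Prop :=
  ∀ X Y : Finset ι, ∀ i ∈ X \ Y,
    (f (X.erase i) + f (insert i Y) ≤ f X + f Y) ∨
    (∃ j ∈ Y \ X, f (insert j (X.erase i)) + f ((insert i Y).erase j) ≤ f X + f Y)

/-- The quadratic function `x ↦ Σ_i h_i x_i + Σ_{i<j} h_{ij} x_i x_j` on `{0,1}^n`. -/
def quadF {n : ℕ} (h : Fin n → ℝ) (H : Fin n → Fin n → WithTop ℝ)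
    (S : Finset (Fin n)) : WithTop ℝ :=
  (∑ i ∈ S, (h i : WithTop ℝ)) + ∑ p ∈ (S ×ˢ S).filter (fun p => p.1 < p.2), H p.1 p.2

/-- A symmetric partial matrix (`none` = undefined entry) is M♮-convex completable if values
in `ℝ ∪ {+∞}` can be assigned to the undefined entries (keeping symmetry) so that for some
finite linear coefficients the resulting quadratic function on `{0,1}^n` is M♮-convex. -/
def Completable {n : ℕ} (H : Fin n → Fin n → Option (WithTop ℝ)) : Prop :=
  ∃ H' : Fin n → Fin n → WithTop ℝ,
    (∀ i j : Fin n, H' i j = H' j i) ∧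
    (∀ i j : Fin n, ∀ a : WithTop ℝ, i ≠ j → H i j = some a → H' i j = a) ∧
    (∃ h : Fin n → ℝ, MnatConvex (quadF h H'))

/-- A cycle of length `m ≥ 3`: distinct vertices, cyclically consecutive ones adjacent. -/
def IsCycle {ι : Type*} (Adj : ι → ι → Prop) (m : ℕ) (v : ZMod m → ι) : Prop :=
  3 ≤ m ∧ Function.Injective v ∧ ∀ p : ZMod m, Adj (v p) (v (p + 1))

/-- The cycle `v` is chordless: no two non-consecutive vertices of it are adjacent. -/
def IsChordless {ι : Type*} (Adj : ι → ι → Prop) (m : ℕ) (v : ZMod m → ι) : Prop :=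
  ∀ p q : ZMod m, q ≠ p → q ≠ p + 1 → p ≠ q + 1 → ¬ Adj (v p) (v q)

/-- The minimum of a family of values in `ℝ ∪ {+∞}` is attained at least twice. -/
def MinTwice {κ : Type*} (w : κ → WithTop ℝ) : Prop :=
  ∃ p q : κ, p ≠ q ∧ (∀ t, w p ≤ w t) ∧ w p = w q

lemma exists_max_mset (s : Multiset (WithTop ℝ)) (hs : s ≠ 0) :
    ∃ m ∈ s, ∀ x ∈ s, x ≤ m := by
  induction s using Multiset.induction_on with
  | empty => exact absurd rfl hs
  | cons a t ih =>
    rcases eq_or_ne t 0 with rfl | ht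
    · exact ⟨a, by simp, by simp⟩
    · obtain ⟨m, hm, hmax⟩ := ih ht
      rcases le_total a m with h | h
      · exact ⟨m, Multiset.mem_cons_of_mem hm, by
          intro x hx; rcases Multiset.mem_cons.1 hx with rfl | hx
          · exact h
          · exact hmax x hx⟩
      · exact ⟨a, Multiset.mem_cons_self a t, by
          intro x hx; rcases Multiset.mem_cons.1 hx with rfl | hx
          · exact le_rfl
          · exact (hmax x hx).trans h⟩

lemma mset_sum_nonneg (s : Multiset (WithTop ℝ)) (h : ∀ x ∈ s, (0:WithTop ℝ) ≤ x) :
    0 ≤ s.sum := by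
  induction s using Multiset.induction_on with
  | empty => simp
  | cons a t ih =>
    rw [Multiset.sum_cons]
    have := h a (Multiset.mem_cons_self a t)
    have ht := ih (fun x hx => h x (Multiset.mem_cons_of_mem hx))
    calc (0:WithTop ℝ) = 0 + 0 := by simp
    _ ≤ a + t.sum := add_le_add this ht

lemma sum_le_of_counts : ∀ (N : ℕ) (L R : Multiset (WithTop ℝ)),
    Multiset.card L ≤ N → (∀ r ∈ R, (0:WithTop ℝ) ≤ r) →
    (∀ θ : WithTop ℝ, Multiset.card (L.filter (fun l => θ ≤ l)) ≤
      Multiset.card (R.filter (fun r => θ ≤ r))) →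
    L.sum ≤ R.sum := by
  intro N
  induction N with
  | zero =>
    intro L R hcard hR _
    have : L = 0 := by
      rw [← Multiset.card_eq_zero]; omega
    subst this
    simpa using mset_sum_nonneg R hR
  | succ N ih =>
    intro L R hcard hR hcount
    rcases eq_or_ne L 0 with rfl | hL
    · simpa using mset_sum_nonneg R hR
    obtain ⟨m, hmL, hmax⟩ := exists_max_mset L hL
    have hLf : 0 < Multiset.card (L.filter (fun l => m ≤ l)) := by
      rw [Multiset.card_pos]
      intro h0
      have : m ∈ L.filter (fun l => m ≤ l) := Multiset.mem_filter.2 ⟨hmL, le_rfl⟩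
      rw [h0] at this; simp at this
    have hRf : 0 < Multiset.card (R.filter (fun r => m ≤ r)) := lt_of_lt_of_le hLf (hcount m)
    obtain ⟨r, hr⟩ := Multiset.card_pos_iff_exists_mem.1 hRf
    have hrR : r ∈ R := (Multiset.mem_filter.1 hr).1
    have hmr : m ≤ r := (Multiset.mem_filter.1 hr).2
    set L' := L.erase m with hL'
    set R' := R.erase r with hR'
    have hLc : L = m ::ₘ L' := (Multiset.cons_erase hmL).symm
    have hRc : R = r ::ₘ R' := (Multiset.cons_erase hrR).symm
    have hR'nn : ∀ x ∈ R', (0:WithTop ℝ) ≤ x := fun x hx =>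
      hR x (Multiset.mem_of_mem_erase hx)
    have hcount' : ∀ θ : WithTop ℝ, Multiset.card (L'.filter (fun l => θ ≤ l)) ≤
        Multiset.card (R'.filter (fun r => θ ≤ r)) := by
      intro θ
      by_cases hθ : θ ≤ m
      · have h1 : L.filter (fun l => θ ≤ l) = m ::ₘ L'.filter (fun l => θ ≤ l) := by
          rw [hLc, Multiset.filter_cons_of_pos _ hθ]
        have h2 : R.filter (fun x => θ ≤ x) = r ::ₘ R'.filter (fun x => θ ≤ x) := by
          rw [hRc, Multiset.filter_cons_of_pos _ (hθ.trans hmr)]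
        have := hcount θ
        rw [h1, h2, Multiset.card_cons, Multiset.card_cons] at this
        omega
      · have : L'.filter (fun l => θ ≤ l) = 0 := by
          rw [Multiset.filter_eq_nil]
          intro a ha h'
          exact hθ (h'.trans (hmax a (Multiset.mem_of_mem_erase ha)))
        simp [this]
    have hcard' : Multiset.card L' ≤ N := by
      have h2 : 0 < Multiset.card L := Multiset.card_pos.2 hL
      rw [hL', Multiset.card_erase_of_mem hmL, Nat.pred_eq_sub_one]
      omega
    have hsum := ih L' R' hcard' hR'nn hcount'
    calc L.sum = m + L'.sum := by rw [hLc, Multiset.sum_cons]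
    _ ≤ r + R'.sum := add_le_add hmr hsum
    _ = R.sum := by rw [hRc, Multiset.sum_cons]

lemma pairSum_eq {n : ℕ} (A : Fin n → Fin n → WithTop ℝ) (S : Finset (Fin n)) :
    ∑ p ∈ (S ×ˢ S).filter (fun p => p.1 < p.2), A p.1 p.2
      = ∑ a ∈ S, ∑ b ∈ S, if a < b then A a b else 0 := by
  rw [Finset.sum_filter, Finset.sum_product]

lemma quadF_insert {n : ℕ} (h : Fin n → ℝ) (A : Fin n → Fin n → WithTop ℝ)
    (hsym : ∀ i j, A i j = A j i) {S : Finset (Fin n)} {x : Fin n} (hx : x ∉ S) :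
    quadF h A (insert x S) = quadF h A S + ((h x : WithTop ℝ) + ∑ k ∈ S, A x k) := by
  unfold quadF
  rw [pairSum_eq, pairSum_eq]
  rw [Finset.sum_insert hx]
  have hinner : ∀ a ∈ S, (∑ b ∈ insert x S, if a < b then A a b else 0)
      = (if a < x then A a x else 0) + ∑ b ∈ S, if a < b then A a b else 0 := by
    intro a _; rw [Finset.sum_insert hx]
  rw [Finset.sum_insert hx, Finset.sum_congr rfl hinner, Finset.sum_add_distrib,
    Finset.sum_insert hx]
  have hxx : (if x < x then A x x else 0) = 0 := by simp
  have hsplit : ∑ k ∈ S, A x k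
      = (∑ b ∈ S, if x < b then A x b else 0) + ∑ a ∈ S, if a < x then A a x else 0 := by
    rw [← Finset.sum_add_distrib]
    apply Finset.sum_congr rfl
    intro k hk
    have hkx : k ≠ x := fun h' => hx (h' ▸ hk)
    rcases lt_or_gt_of_ne hkx with h' | h'
    · simp [h', not_lt_of_gt h', hsym x k]
    · simp [h', not_lt_of_gt h']
  rw [hsplit, hxx, zero_add]
  abel

lemma quadF_empty {n : ℕ} (h : Fin n → ℝ) (A : Fin n → Fin n → WithTop ℝ) :
    quadF h A ∅ = 0 := by
  simp [quadF]

section CoreB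
variable {n : ℕ} (A : Fin n → Fin n → WithTop ℝ)

noncomputable def Cl (θ : WithTop ℝ) (x : Fin n) : Finset (Fin n) :=
  insert x (Finset.univ.filter fun y => y ≠ x ∧ θ ≤ A x y)

lemma mem_Cl {θ : WithTop ℝ} {x y : Fin n} :
    y ∈ Cl A θ x ↔ y = x ∨ (y ≠ x ∧ θ ≤ A x y) := by
  simp [Cl]

lemma Cl_self (θ : WithTop ℝ) (x : Fin n) : x ∈ Cl A θ x := by simp [Cl]

lemma le_of_mem_Cl {θ : WithTop ℝ} {x y : Fin n} (h : y ∈ Cl A θ x) (hne : y ≠ x) :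
    θ ≤ A x y := by
  rcases (mem_Cl A).1 h with h' | h'
  · exact absurd h' hne
  · exact h'.2

lemma Cl_mono {θ θ' : WithTop ℝ} (h : θ ≤ θ') (x : Fin n) : Cl A θ' x ⊆ Cl A θ x := by
  intro y hy
  rcases (mem_Cl A).1 hy with h' | h'
  · exact h' ▸ Cl_self A θ x
  · exact (mem_Cl A).2 (Or.inr ⟨h'.1, h.trans h'.2⟩)

variable (hsym : ∀ i j, A i j = A j i)
  (hanti : ∀ i j k, i ≠ j → j ≠ k → i ≠ k → min (A j k) (A i k) ≤ A i j)

include hsym hanti in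
lemma Cl_trans {θ : WithTop ℝ} {x y z : Fin n} (hxy : x ≠ y) (hyz : y ≠ z) (hxz : x ≠ z)
    (h1 : θ ≤ A x y) (h2 : θ ≤ A y z) : θ ≤ A x z := by
  have := hanti x z y hxz (fun h => hyz h.symm) hxy
  rw [hsym z y] at this
  exact le_trans (le_min h2 h1) this

include hsym hanti in
lemma Cl_eq {θ : WithTop ℝ} {x y : Fin n} (h : y ∈ Cl A θ x) : Cl A θ y = Cl A θ x := by
  rcases (mem_Cl A).1 h with rfl | ⟨hyx, hxy⟩
  · rfl
  ext z
  constructor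
  · intro hz
    rcases (mem_Cl A).1 hz with hzy | ⟨hzy, hyz⟩
    · rw [hzy]; exact h
    · rcases eq_or_ne z x with hzx | hzx
      · rw [hzx]; exact Cl_self A θ x
      · refine (mem_Cl A).2 (Or.inr ⟨hzx, ?_⟩)
        exact Cl_trans A hsym hanti (fun h' => hyx h'.symm) (fun h' => hzy h'.symm)
          (fun h' => hzx h'.symm) hxy hyz
  · intro hz
    rcases (mem_Cl A).1 hz with hzx | ⟨hzx, hxz⟩
    · rw [hzx]
      exact (mem_Cl A).2 (Or.inr ⟨fun h' => hyx h'.symm, by rw [hsym]; exact hxy⟩)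
    · rcases eq_or_ne z y with hzy | hzy
      · rw [hzy]; exact Cl_self A θ y
      · refine (mem_Cl A).2 (Or.inr ⟨hzy, ?_⟩)
        exact Cl_trans A hsym hanti hyx (fun h' => hzx h'.symm) (fun h' => hzy h'.symm)
          (by rw [hsym]; exact hxy) hxz

include hsym hanti in
lemma pair_ge {θ : WithTop ℝ} {x y z : Fin n} (hy : y ∈ Cl A θ x) (hz : z ∈ Cl A θ x)
    (hyz : y ≠ z) : θ ≤ A y z := by
  have h1 : z ∈ Cl A θ y := by rw [Cl_eq A hsym hanti hy]; exact hz
  exact le_of_mem_Cl A h1 (fun h => hyz h.symm)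

include hsym hanti in
lemma chain_heavy (U V : Finset (Fin n)) (hUV : Disjoint U V) :
    ∀ (N : ℕ) (θ : WithTop ℝ) (x : Fin n), (Cl A θ x).card ≤ N →
    (U ∩ Cl A θ x).card < (V ∩ Cl A θ x).card →
    ∃ j ∈ V ∩ Cl A θ x, ∀ θ', θ ≤ θ' → (U ∩ Cl A θ' j).card < (V ∩ Cl A θ' j).card := by
  intro N
  induction N with
  | zero =>
    intro θ x hcard _
    have := Finset.card_pos.2 ⟨x, Cl_self A θ x⟩
    omega
  | succ N ih =>
    intro θ x hcard hheavy
    set C := Cl A θ x with hC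
    have hxC : x ∈ C := Cl_self A θ x
    -- pair values within C
    set pairs := (C ×ˢ C).filter (fun p => p.1 ≠ p.2) with hpairs
    set vals := pairs.image (fun p => A p.1 p.2) with hvals
    have hvals_ge : ∀ a ∈ vals, θ ≤ a := by
      intro a ha
      obtain ⟨p, hp, rfl⟩ := Finset.mem_image.1 ha
      obtain ⟨hpm, hpne⟩ := Finset.mem_filter.1 hp
      obtain ⟨h1, h2⟩ := Finset.mem_product.1 hpm
      exact pair_ge A hsym hanti h1 h2 hpne
    by_cases hvne : vals.Nonempty
    swap
    · -- C is a singleton {x}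
      have hCx : C = {x} := by
        apply Finset.eq_singleton_iff_unique_mem.2 ⟨hxC, ?_⟩
        intro z hz
        by_contra hzx
        exact hvne ⟨A x z, Finset.mem_image.2 ⟨(x, z), Finset.mem_filter.2
          ⟨Finset.mem_product.2 ⟨hxC, hz⟩, fun h => hzx h.symm⟩, rfl⟩⟩
      rw [hCx] at hheavy
      have hxV : x ∈ V := by
        by_contra hxV
        rw [Finset.inter_singleton_of_notMem hxV] at hheavy
        simp at hheavy
      have hxU : x ∉ U := fun hxU => (Finset.disjoint_left.1 hUV hxU) hxV
      refine ⟨x, Finset.mem_inter.2 ⟨hxV, hxC⟩, ?_⟩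
      intro θ' hθ'
      have hsub : Cl A θ' x ⊆ {x} := hCx ▸ Cl_mono A hθ' x
      have hCl' : Cl A θ' x = {x} :=
        Finset.Subset.antisymm hsub (Finset.singleton_subset_iff.2 (Cl_self A θ' x))
      rw [hCl', Finset.inter_singleton_of_notMem hxU, Finset.inter_singleton_of_mem hxV]
      simp
    · set μ := vals.min' hvne with hμ
      have hμmem : μ ∈ vals := vals.min'_mem hvne
      have hθμ : θ ≤ μ := hvals_ge μ hμmem
      obtain ⟨p₀, hp₀, hp₀v⟩ := Finset.mem_image.1 hμmem
      obtain ⟨hp₀m, hp₀ne⟩ := Finset.mem_filter.1 hp₀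
      obtain ⟨hy₀, hz₀⟩ := Finset.mem_product.1 hp₀m
      have hpairval : ∀ y ∈ C, ∀ z ∈ C, y ≠ z → A y z ∈ vals := by
        intro y hy z hz hyz
        exact Finset.mem_image.2 ⟨(y, z), Finset.mem_filter.2
          ⟨Finset.mem_product.2 ⟨hy, hz⟩, hyz⟩, rfl⟩
      have hμle : ∀ y ∈ C, ∀ z ∈ C, y ≠ z → μ ≤ A y z := by
        intro y hy z hz hyz
        exact vals.min'_le _ (hpairval y hy z hz hyz)
      have hClC : ∀ j ∈ C, Cl A θ j = C := fun j hj => Cl_eq A hsym hanti hj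
      have hClfull : ∀ j ∈ C, ∀ θ', θ ≤ θ' → θ' ≤ μ → Cl A θ' j = C := by
        intro j hj θ' h1 h2
        apply Finset.Subset.antisymm
        · exact (hClC j hj) ▸ Cl_mono A h1 j
        · intro z hz
          rcases eq_or_ne z j with rfl | hzj
          · exact Cl_self A θ' z
          · exact (mem_Cl A).2 (Or.inr ⟨hzj, h2.trans (hμle j hj z hz (fun h => hzj h.symm))⟩)
      set S' := vals.filter (fun a => μ < a) with hS'
      by_cases hS'ne : S'.Nonempty
      swap
      · -- all pair values equal μ; above μ everything is a singleton
        have hvle : ∀ a ∈ vals, a ≤ μ := by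
          intro a ha
          by_contra hlt
          exact hS'ne ⟨a, Finset.mem_filter.2 ⟨ha, lt_of_not_ge hlt⟩⟩
        obtain ⟨j, hjVC⟩ : (V ∩ C).Nonempty := by
          apply Finset.card_pos.1; omega
        obtain ⟨hjV, hjC⟩ := Finset.mem_inter.1 hjVC
        refine ⟨j, hjVC, ?_⟩
        intro θ' hθ'
        rcases le_or_gt θ' μ with h2 | h2
        · rw [hClfull j hjC θ' hθ' h2]
          exact hheavy
        · have hsing : Cl A θ' j = {j} := by
            apply Finset.Subset.antisymm
            · intro z hz
              rcases (mem_Cl A).1 hz with rfl | ⟨hzj, hjz⟩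
              · exact Finset.mem_singleton_self z
              · exfalso
                have hzC : z ∈ C := (hClC j hjC) ▸ Cl_mono A hθ' j hz
                have := hvle (A j z) (hpairval j hjC z hzC (fun h => hzj h.symm))
                exact absurd (lt_of_lt_of_le h2 hjz) (not_lt.2 this)
            · exact Finset.singleton_subset_iff.2 (Cl_self A θ' j)
          have hjU : j ∉ U := fun hjU => (Finset.disjoint_left.1 hUV hjU) hjV
          rw [hsing, Finset.inter_singleton_of_notMem hjU, Finset.inter_singleton_of_mem hjV]
          simp
      · set θ₁ := S'.min' hS'ne with hθ₁
        have hθ₁mem : θ₁ ∈ S' := S'.min'_mem hS'ne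
        have hμθ₁ : μ < θ₁ := (Finset.mem_filter.1 hθ₁mem).2
        have hθθ₁ : θ ≤ θ₁ := hθμ.trans hμθ₁.le
        have hθ₁le : ∀ a ∈ vals, μ < a → θ₁ ≤ a := by
          intro a ha h
          exact S'.min'_le _ (Finset.mem_filter.2 ⟨ha, h⟩)
        -- children
        have hchild_sub : ∀ j ∈ C, Cl A θ₁ j ⊆ C := by
          intro j hj
          exact (hClC j hj) ▸ Cl_mono A hθθ₁ j
        have hchild_proper : ∀ j ∈ C, (Cl A θ₁ j).card < C.card := by
          intro j hj
          apply Finset.card_lt_card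
          rw [Finset.ssubset_iff_of_subset (hchild_sub j hj)]
          by_cases hmem : p₀.1 ∈ Cl A θ₁ j
          · refine ⟨p₀.2, hz₀, fun hmem2 => ?_⟩
            have : θ₁ ≤ A p₀.1 p₀.2 := by
              have := pair_ge A hsym hanti (θ := θ₁) (x := j) hmem hmem2 hp₀ne
              exact this
            rw [hp₀v] at this
            exact absurd hμθ₁ (not_lt.2 this)
          · exact ⟨p₀.1, hy₀, hmem⟩
        -- partition of C by the children; find a heavy child
        set P := C.image (fun y => Cl A θ₁ y) with hP
        have hdisj : ∀ D₁ ∈ P, ∀ D₂ ∈ P, D₁ ≠ D₂ → Disjoint D₁ D₂ := by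
          intro D₁ hD₁ D₂ hD₂ hne
          obtain ⟨y₁, hy₁, rfl⟩ := Finset.mem_image.1 hD₁
          obtain ⟨y₂, hy₂, rfl⟩ := Finset.mem_image.1 hD₂
          rw [Finset.disjoint_left]
          intro z hz1 hz2
          exact hne ((Cl_eq A hsym hanti hz1).symm.trans (Cl_eq A hsym hanti hz2))
        have hcover : ∀ (W : Finset (Fin n)), W ⊆ C → W = P.biUnion (fun D => W ∩ D) := by
          intro W hW
          ext z
          simp only [Finset.mem_biUnion]
          constructor
          · intro hz
            exact ⟨Cl A θ₁ z, Finset.mem_image.2 ⟨z, hW hz, rfl⟩,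
              Finset.mem_inter.2 ⟨hz, Cl_self A θ₁ z⟩⟩
          · rintro ⟨D, _, hzD⟩
            exact (Finset.mem_inter.1 hzD).1
        have hcardW : ∀ (W : Finset (Fin n)), W ⊆ C →
            W.card = ∑ D ∈ P, (W ∩ D).card := by
          intro W hW
          conv_lhs => rw [hcover W hW]
          apply Finset.card_biUnion
          intro D₁ hD₁ D₂ hD₂ hne
          exact Finset.disjoint_of_subset_left (Finset.inter_subset_right)
            (Finset.disjoint_of_subset_right (Finset.inter_subset_right) (hdisj D₁ hD₁ D₂ hD₂ hne))
        have hUC : (U ∩ C).card = ∑ D ∈ P, (U ∩ C ∩ D).card := hcardW (U ∩ C) Finset.inter_subset_right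
        have hVC : (V ∩ C).card = ∑ D ∈ P, (V ∩ C ∩ D).card := hcardW (V ∩ C) Finset.inter_subset_right
        have hsimp : ∀ (W : Finset (Fin n)) (D : Finset (Fin n)), D ∈ P → W ∩ C ∩ D = W ∩ D := by
          intro W D hD
          obtain ⟨y, hy, rfl⟩ := Finset.mem_image.1 hD
          ext z
          simp only [Finset.mem_inter]
          constructor
          · rintro ⟨⟨h1, _⟩, h3⟩; exact ⟨h1, h3⟩
          · rintro ⟨h1, h3⟩; exact ⟨⟨h1, hchild_sub y hy h3⟩, h3⟩
        have hheavychild : ∃ D ∈ P, (U ∩ D).card < (V ∩ D).card := by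
          by_contra hcon
          push_neg at hcon
          have : ∑ D ∈ P, (V ∩ C ∩ D).card ≤ ∑ D ∈ P, (U ∩ C ∩ D).card := by
            apply Finset.sum_le_sum
            intro D hD
            rw [hsimp V D hD, hsimp U D hD]
            exact hcon D hD
          omega
        obtain ⟨D, hDP, hDheavy⟩ := hheavychild
        obtain ⟨y', hy', hDeq⟩ := Finset.mem_image.1 hDP
        have hDcard : (Cl A θ₁ y').card ≤ N := by
          have := hchild_proper y' hy'
          omega
        obtain ⟨j, hjmem, hj⟩ := ih θ₁ y' hDcard (by rw [hDeq]; exact hDheavy)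
        obtain ⟨hjV, hjD⟩ := Finset.mem_inter.1 hjmem
        have hjC : j ∈ C := hchild_sub y' hy' hjD
        refine ⟨j, Finset.mem_inter.2 ⟨hjV, hjC⟩, ?_⟩
        intro θ' hθ'
        rcases le_or_gt θ' μ with h2 | h2
        · rw [hClfull j hjC θ' hθ' h2]
          exact hheavy
        · rcases le_or_gt θ₁ θ' with h3 | h3
          · exact hj θ' h3
          · have hClmid : Cl A θ' j = Cl A θ₁ j := by
              apply Finset.Subset.antisymm
              · intro z hz
                rcases (mem_Cl A).1 hz with rfl | ⟨hzj, hjz⟩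
                · exact Cl_self A θ₁ z
                · have hzC : z ∈ C := (hClC j hjC) ▸ Cl_mono A (hθμ.trans h2.le) j hz
                  refine (mem_Cl A).2 (Or.inr ⟨hzj, ?_⟩)
                  exact hθ₁le (A j z) (hpairval j hjC z hzC (fun h => hzj h.symm))
                    (lt_of_lt_of_le h2 hjz)
              · exact Cl_mono A h3.le j
            rw [hClmid, Cl_eq A hsym hanti hjD]
            have := hj θ₁ le_rfl
            rwa [Cl_eq A hsym hanti hjD] at this
end CoreB

section CoreC
variable {n : ℕ} (A : Fin n → Fin n → WithTop ℝ)

lemma card_filter_map' {α : Type*} (f : α → WithTop ℝ) (s : Multiset α)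
    (p : WithTop ℝ → Prop) [DecidablePred p] :
    Multiset.card (Multiset.filter p (s.map f)) = Multiset.card (s.filter (fun a => p (f a))) := by
  induction s using Multiset.induction_on with
  | empty => simp
  | cons a t ih =>
    by_cases h : p (f a) <;>
      simp [Multiset.filter_cons_of_pos, Multiset.filter_cons_of_neg, h, ih]

lemma inter_Cl_eq_filter {θ : WithTop ℝ} {x : Fin n} {S : Finset (Fin n)} (hx : x ∉ S) :
    S ∩ Cl A θ x = S.filter (fun u => θ ≤ A x u) := by
  ext z
  simp only [Finset.mem_inter, Finset.mem_filter, mem_Cl]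
  constructor
  · rintro ⟨hzS, hz⟩
    rcases hz with hz | hz
    · exact absurd (hz ▸ hzS) hx
    · exact ⟨hzS, hz.2⟩
  · rintro ⟨hzS, hz⟩
    exact ⟨hzS, Or.inr ⟨fun h => hx (h ▸ hzS), hz⟩⟩

variable (hsym : ∀ i j, A i j = A j i)
  (hnn : ∀ i j : Fin n, i ≠ j → 0 ≤ A i j)
  (hanti : ∀ i j k, i ≠ j → j ≠ k → i ≠ k → min (A j k) (A i k) ≤ A i j)

include hsym hnn hanti in
lemma core_exchange (i : Fin n) (U V : Finset (Fin n))
    (hiU : i ∉ U) (hiV : i ∉ V) (hUV : Disjoint U V) :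
    (∑ v ∈ V, A i v ≤ ∑ u ∈ U, A i u) ∨
    ∃ j ∈ V, (∑ u ∈ U, A j u) + (∑ v ∈ V.erase j, A i v) ≤
      (∑ u ∈ U, A i u) + (∑ v ∈ V.erase j, A j v) := by
  classical
  by_cases h0 : ∑ v ∈ V, A i v ≤ ∑ u ∈ U, A i u
  · exact Or.inl h0
  right
  -- a heavy level exists
  have hex : ∃ θ : WithTop ℝ, (U ∩ Cl A θ i).card < (V ∩ Cl A θ i).card := by
    by_contra hno
    push_neg at hno
    apply h0
    have hsum : (V.val.map (fun v => A i v)).sum ≤ (U.val.map (fun u => A i u)).sum := by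
      apply sum_le_of_counts (Multiset.card (V.val.map (fun v => A i v)))
      · exact le_rfl
      · intro r hr
        obtain ⟨u, hu, rfl⟩ := Multiset.mem_map.1 hr
        exact hnn i u (fun h => hiU (h ▸ hu))
      · intro θ
        rw [card_filter_map', card_filter_map']
        have h1 : (Multiset.filter (fun a => θ ≤ A i a) V.val) = (V.filter (fun a => θ ≤ A i a)).val := rfl
        have h2 : (Multiset.filter (fun a => θ ≤ A i a) U.val) = (U.filter (fun a => θ ≤ A i a)).val := rfl
        rw [h1, h2]
        show (V.filter (fun a => θ ≤ A i a)).card ≤ (U.filter (fun a => θ ≤ A i a)).card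
        rw [← inter_Cl_eq_filter A hiV, ← inter_Cl_eq_filter A hiU]
        exact hno θ
    exact hsum
  obtain ⟨θ₀, hθ₀⟩ := hex
  -- the finite set of entry values
  set Vals : Finset (WithTop ℝ) :=
    ((Finset.univ ×ˢ Finset.univ).filter (fun p : Fin n × Fin n => p.1 ≠ p.2)).image
      (fun p => A p.1 p.2) with hVals
  have hmemVals : ∀ x y : Fin n, x ≠ y → A x y ∈ Vals := by
    intro x y hxy
    exact Finset.mem_image.2 ⟨(x, y), Finset.mem_filter.2
      ⟨Finset.mem_product.2 ⟨Finset.mem_univ _, Finset.mem_univ _⟩, hxy⟩, rfl⟩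
  have hreduce : ∀ θ : WithTop ℝ, (U ∩ Cl A θ i).card < (V ∩ Cl A θ i).card →
      ∃ t ∈ Vals, θ ≤ t ∧ Cl A θ i = Cl A t i := by
    intro θ hh
    have hVne : (V ∩ Cl A θ i).Nonempty := Finset.card_pos.1 (by omega)
    obtain ⟨y, hy⟩ := hVne
    obtain ⟨hyV, hyC⟩ := Finset.mem_inter.1 hy
    have hyi : y ≠ i := fun h => hiV (h ▸ hyV)
    have hAiy : θ ≤ A i y := le_of_mem_Cl A hyC hyi
    set T := Vals.filter (fun a => θ ≤ a) with hT
    have hTne : T.Nonempty := ⟨A i y, Finset.mem_filter.2 ⟨hmemVals i y (fun h => hyi h.symm), hAiy⟩⟩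
    refine ⟨T.min' hTne, (Finset.mem_filter.1 (T.min'_mem hTne)).1,
      (Finset.mem_filter.1 (T.min'_mem hTne)).2, ?_⟩
    apply Finset.Subset.antisymm
    · intro z hz
      rcases (mem_Cl A).1 hz with hzi | ⟨hzi, hiz⟩
      · rw [hzi]; exact Cl_self A _ i
      · refine (mem_Cl A).2 (Or.inr ⟨hzi, ?_⟩)
        exact T.min'_le _ (Finset.mem_filter.2 ⟨hmemVals i z (fun h => hzi h.symm), hiz⟩)
    · exact Cl_mono A (Finset.mem_filter.1 (T.min'_mem hTne)).2 i
  -- maximal heavy value level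
  set VH := Vals.filter (fun t => (U ∩ Cl A t i).card < (V ∩ Cl A t i).card) with hVH
  have hVHne : VH.Nonempty := by
    obtain ⟨t, htVals, _, hteq⟩ := hreduce θ₀ hθ₀
    refine ⟨t, Finset.mem_filter.2 ⟨htVals, ?_⟩⟩
    rw [← hteq]
    exact hθ₀
  set θbar := VH.max' hVHne with hθbar
  have hθbarheavy : (U ∩ Cl A θbar i).card < (V ∩ Cl A θbar i).card :=
    (Finset.mem_filter.1 (VH.max'_mem hVHne)).2
  obtain ⟨j, hjmem, hj⟩ := chain_heavy A hsym hanti U V hUV (Cl A θbar i).card θbar i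
    le_rfl hθbarheavy
  obtain ⟨hjV, hjC⟩ := Finset.mem_inter.1 hjmem
  have hji : j ≠ i := fun h => hiV (h ▸ hjV)
  have hjU : j ∉ U := fun h => (Finset.disjoint_left.1 hUV h) hjV
  have hAij : θbar ≤ A i j := le_of_mem_Cl A hjC hji
  -- above A i j, the clique of i is not heavy
  have hnotheavy : ∀ θ : WithTop ℝ, A i j < θ →
      (V ∩ Cl A θ i).card ≤ (U ∩ Cl A θ i).card := by
    intro θ hθ
    by_contra hh
    push_neg at hh
    obtain ⟨t, htVals, htle, hteq⟩ := hreduce θ hh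
    have htVH : t ∈ VH := Finset.mem_filter.2 ⟨htVals, by rw [← hteq]; exact hh⟩
    have := VH.le_max' t htVH
    rw [← hθbar] at this
    exact absurd ((lt_of_le_of_lt hAij hθ).trans_le htle) (by simp [this, not_lt.2 this])
  refine ⟨j, hjV, ?_⟩
  -- final counting argument
  have hcount : ∀ θ : WithTop ℝ,
      (U.filter (fun u => θ ≤ A j u)).card + ((V.erase j).filter (fun v => θ ≤ A i v)).card ≤
      (U.filter (fun u => θ ≤ A i u)).card + ((V.erase j).filter (fun v => θ ≤ A j v)).card := by
    intro θ
    by_cases hθ : θ ≤ A i j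
    · have e1 : U.filter (fun u => θ ≤ A j u) = U.filter (fun u => θ ≤ A i u) := by
        apply Finset.filter_congr
        intro u huU
        have hui : u ≠ i := fun h => hiU (h ▸ huU)
        have huj : u ≠ j := fun h => hjU (h ▸ huU)
        constructor
        · intro h'
          exact Cl_trans A hsym hanti hji.symm (fun h => huj h.symm) (fun h => hui h.symm) hθ h'
        · intro h'
          exact Cl_trans A hsym hanti hji (fun h => hui h.symm) (fun h => huj h.symm)
            (by rw [hsym]; exact hθ) h'
      have e2 : (V.erase j).filter (fun v => θ ≤ A i v) =
          (V.erase j).filter (fun v => θ ≤ A j v) := by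
        apply Finset.filter_congr
        intro v hv
        have hvj : v ≠ j := Finset.ne_of_mem_erase hv
        have hvV : v ∈ V := Finset.mem_of_mem_erase hv
        have hvi : v ≠ i := fun h => hiV (h ▸ hvV)
        constructor
        · intro h'
          exact Cl_trans A hsym hanti hji (fun h => hvi h.symm) (fun h => hvj h.symm)
            (by rw [hsym]; exact hθ) h'
        · intro h'
          exact Cl_trans A hsym hanti hji.symm (fun h => hvj h.symm) (fun h => hvi h.symm) hθ h'
      rw [e1, e2]
    · push_neg at hθ
      have c1 : ((V.erase j).filter (fun v => θ ≤ A i v)).card ≤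
          (U.filter (fun u => θ ≤ A i u)).card := by
        have h1 : ((V.erase j).filter (fun v => θ ≤ A i v)).card ≤
            (V.filter (fun v => θ ≤ A i v)).card :=
          Finset.card_le_card (Finset.filter_subset_filter _ (Finset.erase_subset _ _))
        have h2 := hnotheavy θ hθ
        rw [inter_Cl_eq_filter A hiV, inter_Cl_eq_filter A hiU] at h2
        omega
      have c2 : (U.filter (fun u => θ ≤ A j u)).card ≤
          ((V.erase j).filter (fun v => θ ≤ A j v)).card := by
        have h2 := hj θ (hAij.trans hθ.le)
        have e1 : U ∩ Cl A θ j = U.filter (fun u => θ ≤ A j u) := inter_Cl_eq_filter A hjU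
        have e2 : V ∩ Cl A θ j = insert j ((V.erase j).filter (fun v => θ ≤ A j v)) := by
          ext z
          simp only [Finset.mem_inter, Finset.mem_insert, Finset.mem_filter, Finset.mem_erase]
          constructor
          · rintro ⟨hzV, hzC⟩
            rcases (mem_Cl A).1 hzC with hzj | ⟨hzj, hjz⟩
            · exact Or.inl hzj
            · exact Or.inr ⟨⟨hzj, hzV⟩, hjz⟩
          · rintro (hzj | ⟨⟨hzj, hzV⟩, hjz⟩)
            · rw [hzj]; exact ⟨hjV, Cl_self A θ j⟩
            · exact ⟨hzV, (mem_Cl A).2 (Or.inr ⟨hzj, hjz⟩)⟩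
        rw [e1, e2] at h2
        have hjnot : j ∉ (V.erase j).filter (fun v => θ ≤ A j v) := by
          intro hmem
          exact (Finset.notMem_erase j V) (Finset.mem_filter.1 hmem).1
        rw [Finset.card_insert_of_notMem hjnot] at h2
        omega
      omega
  -- assemble via the multiset counting lemma
  set L : Multiset (WithTop ℝ) := U.val.map (fun u => A j u) +
    (V.erase j).val.map (fun v => A i v) with hL
  set R : Multiset (WithTop ℝ) := U.val.map (fun u => A i u) +
    (V.erase j).val.map (fun v => A j v) with hR
  have hfinal : L.sum ≤ R.sum := by
    apply sum_le_of_counts (Multiset.card L) L R le_rfl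
    · intro r hr
      rcases Multiset.mem_add.1 hr with hr | hr
      · obtain ⟨u, hu, rfl⟩ := Multiset.mem_map.1 hr
        exact hnn i u (fun h => hiU (h ▸ hu))
      · obtain ⟨v, hv, rfl⟩ := Multiset.mem_map.1 hr
        have hv' : v ∈ V.erase j := hv
        exact hnn j v (fun h => (Finset.notMem_erase j V) (h ▸ hv'))
    · intro θ
      rw [hL, hR, Multiset.filter_add, Multiset.filter_add, Multiset.card_add,
        Multiset.card_add, card_filter_map', card_filter_map', card_filter_map',
        card_filter_map']
      exact hcount θ
  rw [hL, hR, Multiset.sum_add, Multiset.sum_add] at hfinal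
  exact hfinal
end CoreC

section CoreD
variable {n : ℕ} (A : Fin n → Fin n → WithTop ℝ)
variable (hsym : ∀ i j, A i j = A j i)
  (hnn : ∀ i j : Fin n, i ≠ j → 0 ≤ A i j)
  (hanti : ∀ i j k, i ≠ j → j ≠ k → i ≠ k → min (A j k) (A i k) ≤ A i j)

include hsym hnn hanti in
theorem good_implies_mnat (h : Fin n → ℝ) : MnatConvex (quadF h A) := by
  intro X Y i hi
  obtain ⟨hiX, hiY⟩ := Finset.mem_sdiff.1 hi
  classical
  set U : Finset (Fin n) := (X.erase i) \ Y with hU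
  set V : Finset (Fin n) := Y \ X with hV
  set W : Finset (Fin n) := (X.erase i) ∩ Y with hW
  have hiU : i ∉ U := fun h' => (Finset.notMem_erase i X) (Finset.mem_sdiff.1 h').1
  have hiV : i ∉ V := fun h' => (Finset.mem_sdiff.1 h').2 hiX
  have hUV : Disjoint U V := by
    rw [Finset.disjoint_left]
    intro a haU haV
    exact (Finset.mem_sdiff.1 haU).2 (Finset.mem_sdiff.1 haV).1
  have hUW : Disjoint U W := by
    rw [Finset.disjoint_left]
    intro a haU haW
    exact (Finset.mem_sdiff.1 haU).2 (Finset.mem_inter.1 haW).2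
  have hXsplit : U ∪ W = X.erase i := Finset.sdiff_union_inter _ _
  have hYW : ∀ z, z ∈ Y ↔ z ∈ V ∪ W := by
    intro z
    simp only [hV, hW, Finset.mem_union, Finset.mem_sdiff, Finset.mem_inter, Finset.mem_erase]
    constructor
    · intro hz
      by_cases hzX : z ∈ X
      · exact Or.inr ⟨⟨fun h' => hiY (h' ▸ hz), hzX⟩, hz⟩
      · exact Or.inl ⟨hz, hzX⟩
    · rintro (⟨hz, _⟩ | ⟨_, hz⟩) <;> exact hz
  have hYsplit : V ∪ W = Y := by
    ext z; rw [hYW z]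
  have hVW : Disjoint V W := by
    rw [Finset.disjoint_left]
    intro a haV haW
    exact (Finset.mem_sdiff.1 haV).2 (Finset.mem_erase.1 (Finset.mem_inter.1 haW).1).2
  rcases core_exchange A hsym hnn hanti i U V hiU hiV hUV with hcase | ⟨j, hjV, hcase⟩
  · -- option 0
    left
    have key : ∑ k ∈ Y, A i k ≤ ∑ k ∈ X.erase i, A i k := by
      rw [← hYsplit, ← hXsplit, Finset.sum_union hVW, Finset.sum_union hUW]
      exact add_le_add_left hcase _
    have eX : quadF h A X = quadF h A (X.erase i) + ((h i : WithTop ℝ) + ∑ k ∈ X.erase i, A i k) := by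
      conv_lhs => rw [← Finset.insert_erase hiX]
      exact quadF_insert h A hsym (Finset.notMem_erase i X)
    rw [eX, quadF_insert h A hsym hiY]
    calc quadF h A (X.erase i) + (quadF h A Y + ((h i : WithTop ℝ) + ∑ k ∈ Y, A i k))
        = (quadF h A (X.erase i) + quadF h A Y + (h i : WithTop ℝ)) + ∑ k ∈ Y, A i k := by abel
      _ ≤ (quadF h A (X.erase i) + quadF h A Y + (h i : WithTop ℝ)) + ∑ k ∈ X.erase i, A i k :=
          add_le_add_right key _
      _ = quadF h A (X.erase i) + ((h i : WithTop ℝ) + ∑ k ∈ X.erase i, A i k) + quadF h A Y := by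
          abel
  · -- exchange with j
    obtain ⟨hjY, hjX⟩ : j ∈ Y ∧ j ∉ X := by
      have := Finset.mem_sdiff.1 hjV
      exact ⟨this.1, this.2⟩
    right
    refine ⟨j, Finset.mem_sdiff.2 ⟨hjY, hjX⟩, ?_⟩
    have hij : i ≠ j := fun h' => hjX (h' ▸ hiX)
    have hjXe : j ∉ X.erase i := fun h' => hjX (Finset.mem_of_mem_erase h')
    have hiYe : i ∉ Y.erase j := fun h' => hiY (Finset.mem_of_mem_erase h')
    have hins : (insert i Y).erase j = insert i (Y.erase j) := by
      ext z
      simp only [Finset.mem_erase, Finset.mem_insert]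
      constructor
      · rintro ⟨hzj, (hzi | hzY)⟩
        · exact Or.inl hzi
        · exact Or.inr ⟨hzj, hzY⟩
      · rintro (hzi | ⟨hzj, hzY⟩)
        · exact ⟨hzi ▸ hij.symm ∘ Eq.symm, Or.inl hzi⟩
        · exact ⟨hzj, Or.inr hzY⟩
    -- splits of X.erase i and Y.erase j
    have hYe : ∀ z, z ∈ Y.erase j ↔ z ∈ (V.erase j) ∪ W := by
      intro z
      simp only [Finset.mem_erase, Finset.mem_union, hYW z]
      constructor
      · rintro ⟨hzj, (hzV | hzW)⟩
        · exact Or.inl ⟨hzj, hzV⟩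
        · exact Or.inr hzW
      · rintro (⟨hzj, hzV⟩ | hzW)
        · exact ⟨hzj, Or.inl hzV⟩
        · refine ⟨?_, Or.inr hzW⟩
          intro h'
          exact (Finset.disjoint_left.1 hVW) (h' ▸ hjV) hzW
    have hYesplit : (V.erase j) ∪ W = Y.erase j := by
      ext z; rw [hYe z]
    have hVeW : Disjoint (V.erase j) W :=
      Finset.disjoint_of_subset_left (Finset.erase_subset _ _) hVW
    -- expansions
    have eX : quadF h A X = quadF h A (X.erase i) + ((h i : WithTop ℝ) + ∑ k ∈ X.erase i, A i k) := by
      conv_lhs => rw [← Finset.insert_erase hiX]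
      exact quadF_insert h A hsym (Finset.notMem_erase i X)
    have eY : quadF h A Y = quadF h A (Y.erase j) + ((h j : WithTop ℝ) + ∑ k ∈ Y.erase j, A j k) := by
      conv_lhs => rw [← Finset.insert_erase hjY]
      exact quadF_insert h A hsym (Finset.notMem_erase j Y)
    rw [hins, eX, eY, quadF_insert h A hsym hjXe, quadF_insert h A hsym hiYe]
    -- reduce to the core inequality with common parts
    have key : ∑ k ∈ X.erase i, A j k + ∑ k ∈ Y.erase j, A i k ≤
        ∑ k ∈ X.erase i, A i k + ∑ k ∈ Y.erase j, A j k := by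
      rw [← hXsplit, ← hYesplit, Finset.sum_union hUW, Finset.sum_union hUW,
        Finset.sum_union hVeW, Finset.sum_union hVeW]
      calc (∑ u ∈ U, A j u + ∑ w ∈ W, A j w) + (∑ v ∈ V.erase j, A i v + ∑ w ∈ W, A i w)
          = (∑ u ∈ U, A j u + ∑ v ∈ V.erase j, A i v) + (∑ w ∈ W, A j w + ∑ w ∈ W, A i w) := by
            abel
        _ ≤ (∑ u ∈ U, A i u + ∑ v ∈ V.erase j, A j v) + (∑ w ∈ W, A j w + ∑ w ∈ W, A i w) :=
            add_le_add_left hcase _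
        _ = (∑ u ∈ U, A i u + ∑ w ∈ W, A i w) + (∑ v ∈ V.erase j, A j v + ∑ w ∈ W, A j w) := by
            abel
    calc quadF h A (X.erase i) + ((h j : WithTop ℝ) + ∑ k ∈ X.erase i, A j k) +
          (quadF h A (Y.erase j) + ((h i : WithTop ℝ) + ∑ k ∈ Y.erase j, A i k))
        = (quadF h A (X.erase i) + quadF h A (Y.erase j) + (h i : WithTop ℝ) + (h j : WithTop ℝ))
            + (∑ k ∈ X.erase i, A j k + ∑ k ∈ Y.erase j, A i k) := by abel
      _ ≤ (quadF h A (X.erase i) + quadF h A (Y.erase j) + (h i : WithTop ℝ) + (h j : WithTop ℝ))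
            + (∑ k ∈ X.erase i, A i k + ∑ k ∈ Y.erase j, A j k) := add_le_add_right key _
      _ = quadF h A (X.erase i) + ((h i : WithTop ℝ) + ∑ k ∈ X.erase i, A i k) +
          (quadF h A (Y.erase j) + ((h j : WithTop ℝ) + ∑ k ∈ Y.erase j, A j k)) := by abel
end CoreD

section CoreE
variable {n : ℕ} (A : Fin n → Fin n → WithTop ℝ)
variable (hsym : ∀ i j, A i j = A j i)

include hsym in
lemma quadF_singleton (h : Fin n → ℝ) (j : Fin n) :
    quadF h A {j} = (h j : WithTop ℝ) := by
  have : ({j} : Finset (Fin n)) = insert j ∅ := rfl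
  rw [this, quadF_insert h A hsym (Finset.notMem_empty j), quadF_empty]
  simp

include hsym in
lemma quadF_pair (h : Fin n → ℝ) {i j : Fin n} (hij : i ≠ j) :
    quadF h A {i, j} = ((h j : WithTop ℝ) + ((h i : WithTop ℝ) + A i j)) := by
  have : ({i, j} : Finset (Fin n)) = insert i {j} := rfl
  rw [this, quadF_insert h A hsym (by simp [hij]), quadF_singleton A hsym]
  simp

lemma cancel_coe_le {c : ℝ} {a b : WithTop ℝ} (h : (c : WithTop ℝ) + a ≤ (c : WithTop ℝ) + b) :
    a ≤ b :=
  (WithTop.add_le_add_iff_left (WithTop.coe_ne_top)).1 h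

variable (h : Fin n → ℝ)

include hsym in
lemma mnat_implies_nonneg (hmn : MnatConvex (quadF h A)) :
    ∀ i j : Fin n, i ≠ j → 0 ≤ A i j := by
  intro i j hij
  have hiX : i ∈ ({i, j} : Finset (Fin n)) \ ∅ := by simp
  rcases hmn {i, j} ∅ i hiX with hc | ⟨j', hj', _⟩
  swap
  · simp at hj'
  have he : Finset.erase ({i, j} : Finset (Fin n)) i = {j} :=
    Finset.erase_insert (by simp [hij])
  rw [he, quadF_singleton A hsym, quadF_pair A hsym h hij, quadF_empty] at hc
  have he2 : (insert i (∅ : Finset (Fin n))) = {i} := rfl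
  rw [he2, quadF_singleton A hsym] at hc
  have hc' : ((h j + h i : ℝ) : WithTop ℝ) + 0 ≤ ((h j + h i : ℝ) : WithTop ℝ) + A i j := by
    push_cast
    calc (↑(h j) + ↑(h i) + 0 : WithTop ℝ) = ↑(h j) + ↑(h i) := by rw [add_zero]
      _ ≤ ↑(h j) + (↑(h i) + A i j) + 0 := hc
      _ = ↑(h j) + ↑(h i) + A i j := by rw [add_zero, add_assoc]
  exact cancel_coe_le hc'

include hsym in
lemma mnat_implies_anti (hmn : MnatConvex (quadF h A)) :
    ∀ i j k : Fin n, i ≠ j → j ≠ k → i ≠ k → min (A j k) (A i k) ≤ A i j := by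
  intro i j k hij hjk hik
  have hiX : i ∈ ({i, j} : Finset (Fin n)) \ {k} := by simp [hik]
  have he : Finset.erase ({i, j} : Finset (Fin n)) i = {j} :=
    Finset.erase_insert (by simp [hij])
  have heik : (insert i ({k} : Finset (Fin n))) = {i, k} := rfl
  rcases hmn {i, j} {k} i hiX with hc | ⟨j', hj', hc⟩
  · -- A i k ≤ A i j
    rw [he, heik, quadF_singleton A hsym, quadF_pair A hsym h hik,
      quadF_pair A hsym h hij, quadF_singleton A hsym] at hc
    have hc' : ((h j + h k + h i : ℝ) : WithTop ℝ) + A i k ≤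
        ((h j + h k + h i : ℝ) : WithTop ℝ) + A i j := by
      push_cast
      calc (↑(h j) + ↑(h k) + ↑(h i) + A i k : WithTop ℝ)
          = ↑(h j) + (↑(h k) + (↑(h i) + A i k)) := by abel
        _ ≤ ↑(h j) + (↑(h i) + A i j) + ↑(h k) := hc
        _ = ↑(h j) + ↑(h k) + ↑(h i) + A i j := by abel
    exact min_le_of_right_le (cancel_coe_le hc')
  · -- j' = k, A j k ≤ A i j
    have hj'k : j' = k := by
      simp only [Finset.mem_sdiff, Finset.mem_singleton] at hj'
      exact hj'.1
    rw [hj'k] at hc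
    rw [he] at hc
    have he5 : (Finset.erase (insert i ({k} : Finset (Fin n))) k) = {i} := by
      ext z
      simp only [Finset.mem_erase, Finset.mem_insert, Finset.mem_singleton]
      constructor
      · rintro ⟨hzk, (hzi | hzk')⟩
        · exact hzi
        · exact absurd hzk' hzk
      · rintro rfl
        exact ⟨hik, Or.inl rfl⟩
    have he3 : (insert k ({j} : Finset (Fin n))) = {k, j} := rfl
    rw [he3, he5, quadF_pair A hsym h (Ne.symm hjk), quadF_singleton A hsym,
      quadF_pair A hsym h hij, quadF_singleton A hsym] at hc
    have hc' : ((h j + h k + h i : ℝ) : WithTop ℝ) + A k j ≤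
        ((h j + h k + h i : ℝ) : WithTop ℝ) + A i j := by
      push_cast
      calc (↑(h j) + ↑(h k) + ↑(h i) + A k j : WithTop ℝ)
          = ↑(h j) + (↑(h k) + A k j) + ↑(h i) := by abel
        _ ≤ ↑(h j) + (↑(h i) + A i j) + ↑(h k) := hc
        _ = ↑(h j) + ↑(h k) + ↑(h i) + A i j := by abel
    have := cancel_coe_le hc'
    rw [hsym k j] at this
    exact min_le_of_left_le this

variable (hanti : ∀ i j k, i ≠ j → j ≠ k → i ≠ k → min (A j k) (A i k) ≤ A i j)

include hsym hanti in
lemma good_cycle_min (m : ℕ) (hm : 3 ≤ m) (x : ZMod m → Fin n)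
    (hinj : Function.Injective x) :
    ∃ p q : ZMod m, p ≠ q ∧ (∀ t, A (x p) (x (p + 1)) ≤ A (x t) (x (t + 1))) ∧
      A (x p) (x (p + 1)) = A (x q) (x (q + 1)) := by
  haveI : NeZero m := ⟨by omega⟩
  set w : ZMod m → WithTop ℝ := fun p => A (x p) (x (p + 1)) with hw
  have hcast : ∀ k : ℕ, 0 < k → k < m → ((k : ZMod m) ≠ 0) := by
    intro k h1 h2 h0
    have hv := ZMod.val_cast_of_lt h2
    rw [h0] at hv
    simp [ZMod.val_zero] at hv
    omega
  obtain ⟨p₀, _, hmin'⟩ := Finset.exists_min_image Finset.univ w ⟨0, Finset.mem_univ 0⟩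
  have hmin : ∀ t, w p₀ ≤ w t := fun t => hmin' t (Finset.mem_univ t)
  by_contra hcon
  push_neg at hcon
  have hlt : ∀ q, q ≠ p₀ → w p₀ < w q := by
    intro q hq
    exact lt_of_le_of_ne (hmin q) (hcon p₀ q (Ne.symm hq) hmin)
  have hone : ((1 : ℕ) : ZMod m) = 1 := Nat.cast_one
  have hadd_ne : ∀ (p : ZMod m) (k : ℕ), 0 < k → k < m → p + (k : ZMod m) ≠ p := by
    intro p k h1 h2 h0
    apply hcast k h1 h2
    have : p + (k : ZMod m) = p + 0 := by rw [h0, add_zero]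
    exact add_left_cancel this
  have claim : ∀ k : ℕ, 1 ≤ k → k ≤ m - 2 →
      w p₀ < A (x (p₀ + 1)) (x (p₀ + 1 + (k : ZMod m))) := by
    intro k
    induction k with
    | zero => omega
    | succ k ih =>
      intro h1 h2
      rcases Nat.eq_or_lt_of_le h1 with hbase | hstep
      · -- k + 1 = 1
        have hk0 : k = 0 := by omega
        subst hk0
        have : ((0 + 1 : ℕ) : ZMod m) = 1 := by norm_num
        rw [this]
        have : w (p₀ + 1) = A (x (p₀ + 1)) (x (p₀ + 1 + 1)) := rfl
        rw [← this]
        exact hlt (p₀ + 1) (by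
          intro h0
          exact hadd_ne p₀ 1 (by omega) (by omega) (by rw [hone]; exact h0))
      · have hk1 : 1 ≤ k := by omega
        have hk2 : k ≤ m - 2 := by omega
        have ihk := ih hk1 hk2
        have hcastsucc : ((k + 1 : ℕ) : ZMod m) = (k : ZMod m) + 1 := by push_cast; ring
        rw [hcastsucc, ← add_assoc]
        -- a = x (p₀+1), b = x (p₀+1+k), c = x (p₀+1+k+1)
        set pa := p₀ + 1 with hpa
        set pb := p₀ + 1 + (k : ZMod m) with hpb
        set pc := p₀ + 1 + (k : ZMod m) + 1 with hpc
        have hab : pa ≠ pb := by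
          rw [hpa, hpb]
          intro h0
          exact hadd_ne (p₀ + 1) k (by omega) (by omega) h0.symm
        have hbc : pb ≠ pc := by
          intro h0
          exact hadd_ne pb 1 (by omega) (by omega) (by rw [hone]; exact h0.symm)
        have hac : pa ≠ pc := by
          rw [hpa, hpc]
          intro h0
          have : pa + ((k + 1 : ℕ) : ZMod m) = pa := by
            rw [hcastsucc, hpa]
            rw [← add_assoc]
            exact h0.symm
          exact hadd_ne pa (k + 1) (by omega) (by omega) this
        have hxab : x pa ≠ x pb := fun h0 => hab (hinj h0)
        have hxbc : x pb ≠ x pc := fun h0 => hbc (hinj h0)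
        have hxac : x pa ≠ x pc := fun h0 => hac (hinj h0)
        have hmain := hanti (x pa) (x pc) (x pb) hxac (fun h0 => hxbc h0.symm) hxab
        -- min (A (x pc) (x pb)) (A (x pa) (x pb)) ≤ A (x pa) (x pc)
        have hwpb : A (x pc) (x pb) = w pb := by
          rw [hsym (x pc) (x pb)]
        have h1' : w p₀ < A (x pc) (x pb) := by
          rw [hwpb]
          apply hlt pb
          rw [hpb]
          intro h0
          have : p₀ + ((1 + k : ℕ) : ZMod m) = p₀ := by
            push_cast
            rw [← add_assoc]
            exact h0
          exact hadd_ne p₀ (1 + k) (by omega) (by omega) this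
        have h2' : w p₀ < A (x pa) (x pb) := ihk
        calc w p₀ < min (A (x pc) (x pb)) (A (x pa) (x pb)) := lt_min h1' h2'
          _ ≤ A (x pa) (x pc) := hmain
  -- final contradiction
  have hfin := claim (m - 2) (by omega) le_rfl
  set pd := p₀ + 1 + ((m - 2 : ℕ) : ZMod m) with hpd
  have hd1 : pd + 1 = p₀ := by
    rw [hpd]
    have : (1 : ZMod m) + ((m - 2 : ℕ) : ZMod m) + 1 = ((m : ℕ) : ZMod m) := by
      push_cast
      have : (m : ℕ) = (m - 2) + 2 := by omega
      rw [this]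
      push_cast
      ring
    calc p₀ + 1 + ((m - 2 : ℕ) : ZMod m) + 1
        = p₀ + ((1 : ZMod m) + ((m - 2 : ℕ) : ZMod m) + 1) := by ring
      _ = p₀ + ((m : ℕ) : ZMod m) := by rw [this]
      _ = p₀ := by rw [ZMod.natCast_self, add_zero]
  have hdp : pd ≠ p₀ := by
    intro h0
    have : p₀ + ((1 + (m - 2) : ℕ) : ZMod m) = p₀ := by
      push_cast
      rw [← add_assoc]
      exact h0
    exact hadd_ne p₀ (1 + (m - 2)) (by omega) (by omega) this
  have hp1d : p₀ + 1 ≠ pd := by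
    rw [hpd]
    intro h0
    exact hadd_ne (p₀ + 1) (m - 2) (by omega) (by omega) h0.symm
  have hp01 : p₀ ≠ p₀ + 1 := by
    intro h0
    exact hadd_ne p₀ 1 (by omega) (by omega) (by rw [hone]; exact h0.symm)
  have hx01 : x p₀ ≠ x (p₀ + 1) := fun h0 => hp01 (hinj h0)
  have hx1d : x (p₀ + 1) ≠ x pd := fun h0 => hp1d (hinj h0)
  have hx0d : x p₀ ≠ x pd := fun h0 => hdp (hinj h0).symm
  have hmain := hanti (x p₀) (x (p₀ + 1)) (x pd) hx01 hx1d hx0d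
  -- min (A (x (p₀+1)) (x pd)) (A (x p₀) (x pd)) ≤ A (x p₀) (x (p₀+1)) = w p₀
  have h1' : w p₀ < A (x (p₀ + 1)) (x pd) := hfin
  have h2' : w p₀ < A (x p₀) (x pd) := by
    have : A (x p₀) (x pd) = w pd := by
      rw [hsym (x p₀) (x pd)]
      simp only [hw]
      rw [hd1]
    rw [this]
    exact hlt pd hdp
  have : w p₀ < w p₀ := by
    calc w p₀ < min (A (x (p₀ + 1)) (x pd)) (A (x p₀) (x pd)) := lt_min h1' h2'
      _ ≤ A (x p₀) (x (p₀ + 1)) := hmain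
      _ = w p₀ := rfl
  exact lt_irrefl _ this
end CoreE

section CoreF
variable {n : ℕ}

lemma head?_append_cons_congr {α : Type*} (l₁ : List α) (a : α) (l₂ l₃ : List α) :
    (l₁ ++ a :: l₂).head? = (l₁ ++ a :: l₃).head? := by
  cases l₁ <;> simp

lemma getLast?_append_cons' {α : Type*} (l₁ : List α) (a : α) (l₂ : List α) :
    (l₁ ++ a :: l₂).getLast? = (a :: l₂).getLast? := by
  rw [List.getLast?_append]
  cases h : (a :: l₂).getLast? with
  | none => exact absurd h (Option.isSome_iff_ne_none.1 (List.getLast?_isSome.2 (by simp)))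
  | some c => simp

lemma not_nodup_decomp {α : Type*} : ∀ (l : List α), ¬l.Nodup →
    ∃ (a : α) (l₁ l₂ l₃ : List α), l = l₁ ++ a :: (l₂ ++ a :: l₃) := by
  intro l
  induction l with
  | nil => intro h; exact absurd List.nodup_nil h
  | cons b t ih =>
    intro h
    rw [List.nodup_cons] at h
    push_neg at h
    by_cases hbt : b ∈ t
    · obtain ⟨s, t', rfl⟩ := List.append_of_mem hbt
      exact ⟨b, [], s, t', by simp⟩
    · obtain ⟨a, l₁, l₂, l₃, rfl⟩ := ih (h hbt)
      exact ⟨a, b :: l₁, l₂, l₃, by simp⟩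

lemma list_decomp_two {α : Type*} (l : List α) (u w : ℕ) (hu : u < w) (hw : w < l.length) :
    l = l.take u ++ l.get ⟨u, by omega⟩ ::
      (((l.drop (u + 1)).take (w - u - 1)) ++ l.get ⟨w, hw⟩ :: l.drop (w + 1)) := by
  conv_lhs => rw [← List.take_append_drop u l]
  congr 1
  rw [List.drop_eq_getElem_cons (by omega : u < l.length)]
  congr 1
  conv_lhs => rw [← List.take_append_drop (w - u - 1) (l.drop (u + 1))]
  congr 1
  rw [List.drop_drop]
  have h1 : u + 1 + (w - u - 1) = w := by omega
  rw [h1, List.drop_eq_getElem_cons hw]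
  simp [List.get_eq_getElem]

variable (H : Fin n → Fin n → Option (WithTop ℝ))

set_option maxHeartbeats 1000000 in
include H in
lemma cycle_case
    (Hsymm : ∀ i j : Fin n, H i j = H j i)
    (hcyc : ∀ (m : ℕ) (v : ZMod m → Fin n),
        IsCycle (fun a b => a ≠ b ∧ (H a b).isSome) m v →
        IsChordless (fun a b => a ≠ b ∧ (H a b).isSome) m v →
        MinTwice (fun p : ZMod m => (H (v p) (v (p + 1))).getD ⊤))
    (θ : WithTop ℝ) (i j : Fin n) (t : List (Fin n))
    (hchain0 : List.Chain' (fun a b => a ≠ b ∧ (H a b).isSome ∧ θ ≤ (H a b).getD ⊤) (i :: t))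
    (hlast : (i :: t).getLast? = some j)
    (hij : i ≠ j) (hsome : (H i j).isSome) (htne : t ≠ [])
    (hlen3 : 3 ≤ (i :: t).length)
    (hnd : (i :: t).Nodup)
    (hchord : ¬∃ (l₁ l₂ l₃ : List (Fin n)) (a b : Fin n),
        (i :: t) = l₁ ++ a :: (l₂ ++ b :: l₃) ∧ l₂ ≠ [] ∧ (H a b).isSome ∧ a ≠ b ∧
        ¬(l₁ = [] ∧ l₃ = [])) :
    θ ≤ (H i j).getD ⊤ := by
  set E := fun a b : Fin n => a ≠ b ∧ (H a b).isSome ∧ θ ≤ (H a b).getD ⊤ with hE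
  have hchain0 : List.Chain' E (i :: t) := hchain0
  set m := (i :: t).length with hm
  clear_value m
  haveI : NeZero m := ⟨by omega⟩
  have hgetlast : (i :: t).get ⟨m - 1, by omega⟩ = j := by
    rw [List.getLast?_eq_getElem?] at hlast
    have h2 := List.getElem?_eq_getElem (show (i :: t).length - 1 < (i :: t).length by omega)
    rw [h2] at hlast
    have h3 := Option.some.inj hlast
    have h5 : (i :: t).get ⟨m - 1, by omega⟩ = (i :: t).get ⟨(i :: t).length - 1, by omega⟩ := by
      congr 1
      simp only [Fin.mk.injEq]
      omega
    rw [h5, List.get_eq_getElem]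
    exact h3
  have hedge : ∀ (a : ℕ) (ha : a + 1 < m),
      E ((i :: t).get ⟨a, by omega⟩) ((i :: t).get ⟨a + 1, by omega⟩) := by
    have hch := List.isChain_iff_getElem.1 hchain0
    intro a ha
    exact hch a (by omega)
  set v : ZMod m → Fin n := fun p => (i :: t).get ⟨p.val, by rw [← hm]; exact ZMod.val_lt p⟩ with hv
  have hcast_of_val : ∀ p : ZMod m, ((p.val : ℕ) : ZMod m) = p :=
    fun p => ZMod.natCast_rightInverse p
  have hvallt : ∀ p : ZMod m, p.val < m := fun p => ZMod.val_lt p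
  have hvallt' : ∀ p : ZMod m, p.val < (i :: t).length := fun p => by
    rw [← hm]; exact ZMod.val_lt p
  have hvinj : Function.Injective v := by
    intro p q hpq
    have h1 : p.val = q.val := by
      have hndinj := List.nodup_iff_injective_get.1 hnd
      have h2 := hndinj hpq
      exact congrArg Fin.val h2
    rw [← hcast_of_val p, ← hcast_of_val q, h1]
  have hval_succ : ∀ p : ZMod m, (p + 1).val = (p.val + 1) % m := by
    intro p
    have h1 : p + 1 = ((p.val + 1 : ℕ) : ZMod m) := by
      rw [Nat.cast_add, Nat.cast_one, hcast_of_val p]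
    rw [h1, ZMod.val_natCast]
  set pc : ZMod m := ((m - 1 : ℕ) : ZMod m) with hpc
  have hpcval : pc.val = m - 1 := ZMod.val_cast_of_lt (by omega)
  have hpc_iff : ∀ p : ZMod m, p.val = m - 1 → p = pc := by
    intro p h
    rw [← hcast_of_val p, h]
  have hconsec : ∀ p : ZMod m, p.val < m - 1 → E (v p) (v (p + 1)) := by
    intro p hp
    have h1 : (p + 1).val = p.val + 1 := by
      rw [hval_succ, Nat.mod_eq_of_lt (by omega)]
    have h2 : v (p + 1) = (i :: t).get ⟨p.val + 1, by omega⟩ := by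
      simp only [hv]
      congr 1
      simp only [Fin.mk.injEq]
      exact h1
    have h3 : v p = (i :: t).get ⟨p.val, by omega⟩ := by
      simp only [hv]
    rw [h2, h3]
    exact hedge p.val (by omega)
  have hvpc : v pc = j := by
    have h2 : v pc = (i :: t).get ⟨m - 1, by omega⟩ := by
      simp only [hv]
      congr 1
      exact Fin.ext hpcval
    rw [h2, hgetlast]
  have hvpc1 : v (pc + 1) = i := by
    have h1 : (pc + 1).val = 0 := by
      rw [hval_succ, hpcval]
      have h2 : m - 1 + 1 = m := by omega
      rw [h2, Nat.mod_self]
    have h2 : v (pc + 1) = (i :: t).get ⟨0, by omega⟩ := by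
      simp only [hv]
      congr 1
      exact Fin.ext h1
    rw [h2]
    rfl
  have hAdj : ∀ p : ZMod m, v p ≠ v (p + 1) ∧ (H (v p) (v (p + 1))).isSome := by
    intro p
    rcases lt_or_ge p.val (m - 1) with hp | hp
    · have h1 := hconsec p hp
      exact ⟨h1.1, h1.2.1⟩
    · have hpeq : p = pc := hpc_iff p (by have := hvallt p; omega)
      rw [hpeq, hvpc, hvpc1]
      refine ⟨hij.symm, ?_⟩
      rw [Hsymm j i]
      exact hsome
  have hChd : IsChordless (fun a b => a ≠ b ∧ (H a b).isSome) m v := by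
    intro p q hqp hqp1 hpq1 hAdjpq
    obtain ⟨hne, hsm⟩ := hAdjpq
    have hkey : ∀ (u w : ℕ) (hu : u < w) (hw : w < (i :: t).length),
        w ≠ u + 1 → ¬(u = 0 ∧ w = (i :: t).length - 1) →
        ((i :: t).get ⟨u, by omega⟩ ≠ (i :: t).get ⟨w, hw⟩) →
        (H ((i :: t).get ⟨u, by omega⟩) ((i :: t).get ⟨w, hw⟩)).isSome → False := by
      intro u w hu hw hwu1 hends hne' hsm'
      apply hchord
      refine ⟨(i :: t).take u, ((i :: t).drop (u + 1)).take (w - u - 1),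
        (i :: t).drop (w + 1), (i :: t).get ⟨u, by omega⟩, (i :: t).get ⟨w, hw⟩,
        list_decomp_two _ u w hu hw, ?_, hsm', hne', ?_⟩
      · have hlen₂ : (((i :: t).drop (u + 1)).take (w - u - 1)).length = w - u - 1 := by
          rw [List.length_take, List.length_drop]
          omega
        intro h0
        rw [h0] at hlen₂
        simp at hlen₂
        omega
      · rintro ⟨h1, h3⟩
        have hu0 : u = 0 := by
          rcases List.take_eq_nil_iff.1 h1 with h | h
          · exact h
          · simp at h
        have hw1 : w = (i :: t).length - 1 := by
          have := List.drop_eq_nil_iff.1 h3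
          omega
        exact hends ⟨hu0, hw1⟩
    have hne_val : p.val ≠ q.val := by
      intro h0
      apply hqp
      rw [← hcast_of_val p, ← hcast_of_val q, h0]
    have hq_not : q.val ≠ (p.val + 1) % m := by
      intro h0
      apply hqp1
      rw [← hcast_of_val q, h0, ZMod.natCast_mod, Nat.cast_add, Nat.cast_one,
        hcast_of_val p]
    have hp_not : p.val ≠ (q.val + 1) % m := by
      intro h0
      apply hpq1
      rw [← hcast_of_val p, h0, ZMod.natCast_mod, Nat.cast_add, Nat.cast_one,
        hcast_of_val q]
    rcases lt_or_gt_of_ne hne_val with hlt | hgt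
    · apply hkey p.val q.val hlt (hvallt' q) ?_ ?_ hne hsm
      · intro h0
        apply hq_not
        rw [Nat.mod_eq_of_lt (by have := hvallt q; omega)]
        exact h0
      · rintro ⟨h1, h2⟩
        apply hp_not
        rw [h1, h2]
        have h4 : (i :: t).length - 1 + 1 = m := by omega
        rw [h4, Nat.mod_self]
    · apply hkey q.val p.val hgt (hvallt' p) ?_ ?_ (Ne.symm hne) ?_
      · intro h0
        apply hp_not
        rw [Nat.mod_eq_of_lt (by have := hvallt p; omega)]
        exact h0
      · rintro ⟨h1, h2⟩
        apply hq_not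
        rw [h1, h2]
        have h4 : (i :: t).length - 1 + 1 = m := by omega
        rw [h4, Nat.mod_self]
      · rw [show ((i :: t).get ⟨q.val, hvallt' q⟩ : Fin n) = v q from rfl,
          show ((i :: t).get ⟨p.val, hvallt' p⟩ : Fin n) = v p from rfl, Hsymm]
        exact hsm
  have hCyc : IsCycle (fun a b => a ≠ b ∧ (H a b).isSome) m v :=
    ⟨by omega, hvinj, hAdj⟩
  obtain ⟨p, q, hpq, hminp, heqw⟩ := hcyc m v hCyc hChd
  have hwc : ∀ s : ZMod m, s ≠ pc → θ ≤ (H (v s) (v (s + 1))).getD ⊤ := by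
    intro s hs
    have h1 : s.val < m - 1 := by
      have h2 := hvallt s
      rcases lt_or_ge s.val (m - 1) with h | h
      · exact h
      · exact absurd (hpc_iff s (by omega)) hs
    exact (hconsec s h1).2.2
  have hwpc : (H (v pc) (v (pc + 1))).getD ⊤ = (H i j).getD ⊤ := by
    rw [hvpc, hvpc1, Hsymm j i]
  by_cases hp : p = pc
  · have hq : q ≠ pc := by
      rw [← hp]
      exact fun h => hpq h.symm
    calc θ ≤ (H (v q) (v (q + 1))).getD ⊤ := hwc q hq
      _ = (H (v p) (v (p + 1))).getD ⊤ := heqw.symm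
      _ = (H (v pc) (v (pc + 1))).getD ⊤ := by rw [hp]
      _ = (H i j).getD ⊤ := hwpc
  · calc θ ≤ (H (v p) (v (p + 1))).getD ⊤ := hwc p hp
      _ ≤ (H (v pc) (v (pc + 1))).getD ⊤ := hminp pc
      _ = (H i j).getD ⊤ := hwpc



include H in
lemma walk_bound
    (Hsymm : ∀ i j : Fin n, H i j = H j i)
    (hcyc : ∀ (m : ℕ) (v : ZMod m → Fin n),
        IsCycle (fun a b => a ≠ b ∧ (H a b).isSome) m v →
        IsChordless (fun a b => a ≠ b ∧ (H a b).isSome) m v →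
        MinTwice (fun p : ZMod m => (H (v p) (v (p + 1))).getD ⊤)) :
    ∀ (L : ℕ) (θ : WithTop ℝ) (l : List (Fin n)),
      l.length ≤ L →
      l.Chain' (fun a b => a ≠ b ∧ (H a b).isSome ∧ θ ≤ (H a b).getD ⊤) →
      ∀ i j : Fin n, l.head? = some i → l.getLast? = some j → i ≠ j →
      (H i j).isSome → θ ≤ (H i j).getD ⊤ := by
  intro L
  induction L with
  | zero =>
    intro θ l hlen _ i j hhead _ _ _
    have : l = [] := List.eq_nil_of_length_eq_zero (by omega)
    rw [this] at hhead
    simp at hhead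
  | succ L ih =>
    intro θ l0 hlen0 hchain0 i j hhead0 hlast0 hij hsome
    set E := fun a b : Fin n => a ≠ b ∧ (H a b).isSome ∧ θ ≤ (H a b).getD ⊤ with hE
    -- l0 = i :: t with t ≠ []
    obtain ⟨t, rfl⟩ : ∃ t, l0 = i :: t := by
      cases l0 with
      | nil => simp at hhead0
      | cons a t => simp at hhead0; exact ⟨t, by rw [hhead0]⟩
    have htne : t ≠ [] := by
      intro h0
      rw [h0] at hlast0
      simp at hlast0
      exact hij hlast0
    have hlen : (i :: t).length ≤ L + 1 := hlen0
    have hchain : List.Chain' E (i :: t) := hchain0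
    have hlast : (i :: t).getLast? = some j := hlast0
    have hlen2 : 2 ≤ (i :: t).length := by
      cases t with
      | nil => exact absurd rfl htne
      | cons a s => simp
    by_cases hL2 : (i :: t).length = 2
    · -- direct edge
      obtain ⟨x, hx⟩ : ∃ x, t = [x] := by
        cases t with
        | nil => exact absurd rfl htne
        | cons a s =>
          cases s with
          | nil => exact ⟨a, rfl⟩
          | cons b s' => simp at hL2
      rw [hx] at hlast hchain
      simp at hlast
      rw [hlast] at hchain
      have := (List.isChain_cons_cons.1 (show List.Chain' E (i :: [j]) from hchain)).1
      exact this.2.2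
    · -- length ≥ 3
      have hlen3 : 3 ≤ (i :: t).length := by omega
      by_cases hnd : (i :: t).Nodup
      · by_cases hchord : ∃ (l₁ l₂ l₃ : List (Fin n)) (a b : Fin n),
            (i :: t) = l₁ ++ a :: (l₂ ++ b :: l₃) ∧ l₂ ≠ [] ∧ (H a b).isSome ∧ a ≠ b ∧
            ¬(l₁ = [] ∧ l₃ = [])
        · -- chord surgery
          obtain ⟨l₁, l₂, l₃, a, b, heq, hl₂ne, hsab, hab, hends⟩ := hchord
          have hsizes : t.length + 1 = l₁.length + l₂.length + l₃.length + 2 := by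
            have := congrArg List.length heq
            simp [List.length_append] at this
            omega
          have hends' : 1 ≤ l₁.length + l₃.length := by
            by_cases h1 : l₁ = []
            · have h3 : l₃ ≠ [] := fun h3 => hends ⟨h1, h3⟩
              have := List.length_pos_iff.2 h3
              omega
            · have := List.length_pos_iff.2 h1
              omega
          have hl₂len : 1 ≤ l₂.length := List.length_pos_iff.2 hl₂ne
          have hlen' : t.length + 1 ≤ L + 1 := by simpa using hlen
          rw [heq] at hchain
          obtain ⟨C1, CX, J1⟩ := List.isChain_append.1 hchain
          have CX' : List.Chain' E ((a :: l₂) ++ (b :: l₃)) := by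
            rw [List.cons_append]; exact CX
          obtain ⟨C2a, C2b, J2⟩ := List.isChain_append.1 CX'
          -- inner walk
          have hinner : θ ≤ (H a b).getD ⊤ := by
            have hli : List.Chain' E ((a :: l₂) ++ [b]) := by
              have heq2 : ((a :: l₂) ++ [b]) ++ l₃ = (a :: l₂) ++ (b :: l₃) := by simp
              have hCX'' : List.Chain' E (((a :: l₂) ++ [b]) ++ l₃) := by
                rw [heq2]; exact CX'
              exact (List.isChain_append.1 hCX'').1
            apply ih θ ((a :: l₂) ++ [b]) ?_ hli a b ?_ ?_ hab hsab
            · have : ((a :: l₂) ++ [b]).length = l₂.length + 2 := by simp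
              omega
            · simp
            · exact getLast?_append_cons' (a :: l₂) b []
          have hEab : E a b := ⟨hab, hsab, hinner⟩
          -- outer walk
          have hlo : List.Chain' E (l₁ ++ a :: b :: l₃) := by
            apply List.isChain_append.2
            refine ⟨C1, ?_, ?_⟩
            · exact List.isChain_cons_cons.2 ⟨hEab, C2b⟩
            · intro x hx y hy
              apply J1 x hx y
              simp only [List.head?_cons] at hy ⊢
              exact hy
          apply ih θ (l₁ ++ a :: b :: l₃) ?_ hlo i j ?_ ?_ hij hsome
          · have : (l₁ ++ a :: b :: l₃).length = l₁.length + l₃.length + 2 := by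
              simp [List.length_append]; omega
            omega
          · rw [← hhead0, heq]
            exact (head?_append_cons_congr l₁ a (b :: l₃) (l₂ ++ b :: l₃))
          · rw [← hlast, heq]
            rw [getLast?_append_cons' l₁ a (b :: l₃), List.getLast?_cons_cons,
              getLast?_append_cons' l₁ a (l₂ ++ b :: l₃)]
            have heq3 : (a :: (l₂ ++ b :: l₃)) = (a :: l₂) ++ (b :: l₃) := by simp
            rw [heq3, getLast?_append_cons' (a :: l₂) b l₃]
        · -- chordless cycle case
          exact cycle_case H Hsymm hcyc θ i j t hchain0 hlast hij hsome htne hlen3 hnd hchord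
      · -- duplicate surgery
        obtain ⟨a, l₁, l₂, l₃, heq⟩ := not_nodup_decomp _ hnd
        have hsizes : t.length + 1 = l₁.length + l₂.length + l₃.length + 2 := by
          have := congrArg List.length heq
          simp [List.length_append] at this
          omega
        have hlen' : t.length + 1 ≤ L + 1 := by simpa using hlen
        rw [heq] at hchain
        obtain ⟨C1, CX, J1⟩ := List.isChain_append.1 hchain
        have CX' : List.Chain' E ((a :: l₂) ++ (a :: l₃)) := by
          rw [List.cons_append]; exact CX
        obtain ⟨C2a, C2b, J2⟩ := List.isChain_append.1 CX'
        have hlo : List.Chain' E (l₁ ++ a :: l₃) := by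
          apply List.isChain_append.2
          refine ⟨C1, C2b, ?_⟩
          intro x hx y hy
          apply J1 x hx y
          simp only [List.head?_cons] at hy ⊢
          exact hy
        apply ih θ (l₁ ++ a :: l₃) ?_ hlo i j ?_ ?_ hij hsome
        · have : (l₁ ++ a :: l₃).length = l₁.length + l₃.length + 1 := by
            simp [List.length_append]
            omega
          omega
        · rw [← hhead0, heq]
          exact head?_append_cons_congr l₁ a l₃ (l₂ ++ a :: l₃)
        · rw [← hlast, heq]
          rw [getLast?_append_cons' l₁ a l₃, getLast?_append_cons' l₁ a (l₂ ++ a :: l₃)]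
          have heq3 : (a :: (l₂ ++ a :: l₃)) = (a :: l₂) ++ (a :: l₃) := by simp
          rw [heq3, getLast?_append_cons' (a :: l₂) a l₃]
end CoreF

section CoreG
variable {n : ℕ} (H : Fin n → Fin n → Option (WithTop ℝ))

def Conn (θ : WithTop ℝ) (a b : Fin n) : Prop :=
  ∃ l : List (Fin n),
    l.Chain' (fun x y => x ≠ y ∧ (H x y).isSome ∧ θ ≤ (H x y).getD ⊤) ∧
    l.head? = some a ∧ l.getLast? = some b

lemma Conn_single {θ : WithTop ℝ} {a b : Fin n} (hab : a ≠ b) (h : (H a b).isSome)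
    (hθ : θ ≤ (H a b).getD ⊤) : Conn H θ a b :=
  ⟨[a, b], List.isChain_pair.2 ⟨hab, h, hθ⟩, by simp, by simp⟩

lemma Conn_mono {θ θ' : WithTop ℝ} (hθ : θ ≤ θ') {a b : Fin n} (h : Conn H θ' a b) :
    Conn H θ a b := by
  obtain ⟨l, hch, hh, hl⟩ := h
  exact ⟨l, List.IsChain.imp (fun x y hxy => ⟨hxy.1, hxy.2.1, hθ.trans hxy.2.2⟩) hch, hh, hl⟩

lemma Conn_symm (Hsymm : ∀ i j : Fin n, H i j = H j i) {θ : WithTop ℝ} {a b : Fin n}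
    (h : Conn H θ a b) : Conn H θ b a := by
  obtain ⟨l, hch, hh, hl⟩ := h
  refine ⟨l.reverse, ?_, ?_, ?_⟩
  · refine List.isChain_reverse.2 ?_
    apply hch.imp
    intro x y hxy
    refine ⟨fun h' => hxy.1 h'.symm, ?_, ?_⟩
    · rw [Hsymm y x]; exact hxy.2.1
    · rw [Hsymm y x]; exact hxy.2.2
  · rw [List.head?_reverse]; exact hl
  · rw [List.getLast?_reverse]; exact hh

lemma Conn_trans {θ : WithTop ℝ} {a b c : Fin n} (h1 : Conn H θ a b) (h2 : Conn H θ b c) :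
    Conn H θ a c := by
  obtain ⟨l₁, hch₁, hh₁, hl₁⟩ := h1
  obtain ⟨l₂, hch₂, hh₂, hl₂⟩ := h2
  obtain ⟨t₂, rfl⟩ : ∃ t₂, l₂ = b :: t₂ := by
    cases l₂ with
    | nil => simp at hh₂
    | cons x s => simp at hh₂; exact ⟨s, by rw [hh₂]⟩
  cases t₂ with
  | nil =>
    simp at hl₂
    exact hl₂ ▸ ⟨l₁, hch₁, hh₁, hl₁⟩
  | cons x s =>
    obtain ⟨hRbx, hch₂'⟩ := List.isChain_cons_cons.1 hch₂
    refine ⟨l₁ ++ (x :: s), ?_, ?_, ?_⟩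
    · apply List.isChain_append.2
      refine ⟨hch₁, hch₂', ?_⟩
      intro z hz y hy
      simp only [List.head?_cons, Option.mem_def, Option.some.injEq] at hy
      have hzb : z = b := by
        rw [hl₁] at hz
        exact (by simpa using hz : b = z).symm
      rw [hzb, ← hy]
      exact hRbx
    · obtain ⟨t₁, rfl⟩ : ∃ t₁, l₁ = a :: t₁ := by
        cases l₁ with
        | nil => simp at hh₁
        | cons z s' => simp at hh₁; exact ⟨s', by rw [hh₁]⟩
      simp
    · rw [getLast?_append_cons' l₁ x s, ← List.getLast?_cons_cons]
      exact hl₂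

open Classical in
noncomputable def Bmat (a b : Fin n) : WithTop ℝ :=
  ((((Finset.univ ×ˢ Finset.univ).filter
      (fun p : Fin n × Fin n => p.1 ≠ p.2 ∧ (H p.1 p.2).isSome)).image
      (fun p => (H p.1 p.2).getD ⊤) |> insert (0 : WithTop ℝ)).filter
      (fun θ => Conn H θ a b)).max.unbotD 0

lemma mem_candidates {i j : Fin n} (hij : i ≠ j) (h : (H i j).isSome) :
    (H i j).getD ⊤ ∈ insert (0 : WithTop ℝ)
      (((Finset.univ ×ˢ Finset.univ).filter
        (fun p : Fin n × Fin n => p.1 ≠ p.2 ∧ (H p.1 p.2).isSome)).image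
        (fun p => (H p.1 p.2).getD ⊤)) := by
  apply Finset.mem_insert_of_mem
  exact Finset.mem_image.2 ⟨(i, j), Finset.mem_filter.2
    ⟨Finset.mem_product.2 ⟨Finset.mem_univ _, Finset.mem_univ _⟩, hij, h⟩, rfl⟩

lemma candidates_nonneg (Hnn : ∀ (i j : Fin n) (a : WithTop ℝ), i ≠ j → H i j = some a → 0 ≤ a)
    {x : WithTop ℝ}
    (hx : x ∈ insert (0 : WithTop ℝ)
      (((Finset.univ ×ˢ Finset.univ).filter
        (fun p : Fin n × Fin n => p.1 ≠ p.2 ∧ (H p.1 p.2).isSome)).image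
        (fun p => (H p.1 p.2).getD ⊤))) : 0 ≤ x := by
  rcases Finset.mem_insert.1 hx with rfl | hx
  · exact le_rfl
  · obtain ⟨p, hp, rfl⟩ := Finset.mem_image.1 hx
    obtain ⟨hpm, hpne, hps⟩ := Finset.mem_filter.1 hp
    obtain ⟨a, ha⟩ := Option.isSome_iff_exists.1 hps
    rw [ha]
    exact Hnn p.1 p.2 a hpne ha

lemma le_unbot'_of_mem {s : Finset (WithTop ℝ)} {θ : WithTop ℝ} (h : θ ∈ s) :
    θ ≤ s.max.unbotD 0 := by
  have h1 := Finset.le_max h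
  cases hmax : s.max with
  | bot => rw [hmax] at h1; exact absurd h1 (by simp)
  | coe M =>
    rw [hmax] at h1
    have h3 : θ ≤ M := by exact_mod_cast h1
    exact h3

lemma unbot'_mem_or (s : Finset (WithTop ℝ)) : s.max.unbotD 0 = 0 ∨ s.max.unbotD 0 ∈ s := by
  cases hmax : s.max with
  | bot => left; rfl
  | coe M => right; exact Finset.mem_of_max hmax

lemma Bmat_spec (a b : Fin n) :
    Bmat H a b = 0 ∨
    (Bmat H a b ∈ insert (0 : WithTop ℝ)
      (((Finset.univ ×ˢ Finset.univ).filter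
        (fun p : Fin n × Fin n => p.1 ≠ p.2 ∧ (H p.1 p.2).isSome)).image
        (fun p => (H p.1 p.2).getD ⊤)) ∧ Conn H (Bmat H a b) a b) := by
  classical
  rcases unbot'_mem_or ((((Finset.univ ×ˢ Finset.univ).filter
      (fun p : Fin n × Fin n => p.1 ≠ p.2 ∧ (H p.1 p.2).isSome)).image
      (fun p => (H p.1 p.2).getD ⊤) |> insert (0 : WithTop ℝ)).filter
      (fun θ => Conn H θ a b)) with h | h
  · exact Or.inl h
  · right
    have h1 := Finset.mem_filter.1 h
    exact ⟨h1.1, h1.2⟩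

lemma Bmat_le {θ : WithTop ℝ} {a b : Fin n}
    (hθ : θ ∈ insert (0 : WithTop ℝ)
      (((Finset.univ ×ˢ Finset.univ).filter
        (fun p : Fin n × Fin n => p.1 ≠ p.2 ∧ (H p.1 p.2).isSome)).image
        (fun p => (H p.1 p.2).getD ⊤)))
    (hconn : Conn H θ a b) : θ ≤ Bmat H a b := by
  classical
  apply le_unbot'_of_mem
  exact Finset.mem_filter.2 ⟨hθ, hconn⟩

lemma Bmat_nonneg (Hnn : ∀ (i j : Fin n) (a : WithTop ℝ), i ≠ j → H i j = some a → 0 ≤ a)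
    (a b : Fin n) : 0 ≤ Bmat H a b := by
  rcases Bmat_spec H a b with h | ⟨h, _⟩
  · rw [h]
  · exact candidates_nonneg H Hnn h

lemma Bmat_symm (Hsymm : ∀ i j : Fin n, H i j = H j i) (a b : Fin n) :
    Bmat H a b = Bmat H b a := by
  classical
  unfold Bmat
  have h : ∀ θ ∈ (((Finset.univ ×ˢ Finset.univ).filter
        (fun p : Fin n × Fin n => p.1 ≠ p.2 ∧ (H p.1 p.2).isSome)).image
        (fun p => (H p.1 p.2).getD ⊤) |> insert (0 : WithTop ℝ)),
      Conn H θ a b ↔ Conn H θ b a :=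
    fun θ _ => ⟨fun h => Conn_symm H Hsymm h, fun h => Conn_symm H Hsymm h⟩
  rw [Finset.filter_congr h]

lemma Bmat_agree
    (Hsymm : ∀ i j : Fin n, H i j = H j i)
    (Hnn : ∀ (i j : Fin n) (a : WithTop ℝ), i ≠ j → H i j = some a → 0 ≤ a)
    (hcyc : ∀ (m : ℕ) (v : ZMod m → Fin n),
        IsCycle (fun a b => a ≠ b ∧ (H a b).isSome) m v →
        IsChordless (fun a b => a ≠ b ∧ (H a b).isSome) m v →
        MinTwice (fun p : ZMod m => (H (v p) (v (p + 1))).getD ⊤))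
    {i j : Fin n} {a : WithTop ℝ} (hij : i ≠ j) (ha : H i j = some a) :
    Bmat H i j = a := by
  have hsome : (H i j).isSome := by rw [ha]; rfl
  have hgetD : (H i j).getD ⊤ = a := by rw [ha]; rfl
  apply le_antisymm
  · rcases Bmat_spec H i j with h | ⟨_, hconn⟩
    · rw [h]
      exact Hnn i j a hij ha
    · obtain ⟨l, hch, hh, hl⟩ := hconn
      have := walk_bound H Hsymm hcyc l.length (Bmat H i j) l le_rfl hch i j hh hl hij hsome
      rw [hgetD] at this
      exact this
  · have h1 := Bmat_le H (mem_candidates H hij hsome)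
      (Conn_single H hij hsome le_rfl)
    rw [hgetD] at h1
    exact h1

lemma Bmat_anti
    (Hsymm : ∀ i j : Fin n, H i j = H j i)
    (Hnn : ∀ (i j : Fin n) (a : WithTop ℝ), i ≠ j → H i j = some a → 0 ≤ a)
    (i j k : Fin n) (hij : i ≠ j) (hjk : j ≠ k) (hik : i ≠ k) :
    min (Bmat H j k) (Bmat H i k) ≤ Bmat H i j := by
  rcases Bmat_spec H j k with h1 | ⟨h1mem, h1conn⟩
  · calc min (Bmat H j k) (Bmat H i k) ≤ Bmat H j k := min_le_left _ _
      _ = 0 := h1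
      _ ≤ Bmat H i j := Bmat_nonneg H Hnn i j
  rcases Bmat_spec H i k with h2 | ⟨h2mem, h2conn⟩
  · calc min (Bmat H j k) (Bmat H i k) ≤ Bmat H i k := min_le_right _ _
      _ = 0 := h2
      _ ≤ Bmat H i j := Bmat_nonneg H Hnn i j
  set θ := min (Bmat H j k) (Bmat H i k) with hθ
  have hθmem : θ ∈ insert (0 : WithTop ℝ)
      (((Finset.univ ×ˢ Finset.univ).filter
        (fun p : Fin n × Fin n => p.1 ≠ p.2 ∧ (H p.1 p.2).isSome)).image
        (fun p => (H p.1 p.2).getD ⊤)) := by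
    rcases min_cases (Bmat H j k) (Bmat H i k) with ⟨hmin, _⟩ | ⟨hmin, _⟩ <;>
      rw [hθ, hmin]
    · exact h1mem
    · exact h2mem
  have hconn1 : Conn H θ j k := Conn_mono H (min_le_left _ _) h1conn
  have hconn2 : Conn H θ i k := Conn_mono H (min_le_right _ _) h2conn
  have hconn : Conn H θ i j :=
    Conn_trans H hconn2 (Conn_symm H Hsymm hconn1)
  exact Bmat_le H hθmem hconn
end CoreG

/-- A symmetric partial matrix whose defined entries are nonnegative and satisfy the
anti-ultrametric property (whenever all three entries of a triple are defined) is M♮-convex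
completable iff on every chordless cycle of the assignment graph `G_H` (vertices `[n]`,
edges the defined pairs, weighted by the entries) the minimum edge weight is attained by at
least two edges. -/
theorem stmt1 (n : ℕ) (H : Fin n → Fin n → Option (WithTop ℝ))
    (Hsymm : ∀ i j : Fin n, H i j = H j i)
    (Hnn : ∀ (i j : Fin n) (a : WithTop ℝ), i ≠ j → H i j = some a → 0 ≤ a)
    (Hanti : ∀ (i j k : Fin n) (a b c : WithTop ℝ), i ≠ j → j ≠ k → i ≠ k →
      H i j = some a → H j k = some b → H i k = some c → min b c ≤ a) :
    Completable H ↔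
      ∀ (m : ℕ) (v : ZMod m → Fin n),
        IsCycle (fun a b => a ≠ b ∧ (H a b).isSome) m v →
        IsChordless (fun a b => a ≠ b ∧ (H a b).isSome) m v →
        MinTwice (fun p : ZMod m => (H (v p) (v (p + 1))).getD ⊤) := by
  constructor
  · rintro ⟨H', hsymm', hagree, h, hmn⟩ m v hcycv hchd
    obtain ⟨hm3, hinj, hadj⟩ := hcycv
    have hanti' := mnat_implies_anti H' hsymm' h hmn
    obtain ⟨p, q, hpq, hmin, heq⟩ := good_cycle_min H' hsymm' hanti' m hm3 v hinj
    have hedge_eq : ∀ r : ZMod m, (H (v r) (v (r + 1))).getD ⊤ = H' (v r) (v (r + 1)) := by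
      intro r
      obtain ⟨hne, hsm⟩ := hadj r
      obtain ⟨a, ha⟩ := Option.isSome_iff_exists.1 hsm
      rw [ha, hagree (v r) (v (r + 1)) a hne ha]
      rfl
    refine ⟨p, q, hpq, ?_, ?_⟩
    · intro s
      simp only [hedge_eq]
      exact hmin s
    · simp only [hedge_eq]
      exact heq
  · intro hcyc
    refine ⟨Bmat H, Bmat_symm H Hsymm, ?_, fun _ => 0, ?_⟩
    · intro i j a hij ha
      exact Bmat_agree H Hsymm Hnn hcyc hij ha
    · exact good_implies_mnat (Bmat H) (Bmat_symm H Hsymm)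
        (fun i j _ => Bmat_nonneg H Hnn i j)
        (fun i j k hij hjk hik => Bmat_anti H Hsymm Hnn i j k hij hjk hik) _
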